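/- arXiv:1408.0377 — 3 statements merged into one kernel-verified Lean document; each statement's English description precedes it below -/
import Mathlib

section
/- Let n, r, m, t be integers with 0 < m < r ≤ n and 0 ≤ t ≤ n. Then ∑_{p = max(1, r-(n-t))}^{min(t,r)} C(t, p)·C(n-t, r-p)·min(p, r-m) ≤ C(n, r)·(r-m), with equality if and only if n - t ≤ m. -/
lemma vandermonde_range (n r t : ℕ) (htn : t ≤ n) :
    ∑ p ∈ Finset.range (r + 1), t.choose p * (n - t).choose (r - p) = n.choose r := by
  have h := Nat.add_choose_eq t (n - t) r
  rw [Nat.add_sub_cancel' htn] at h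
  rw [h, Finset.Nat.sum_antidiagonal_eq_sum_range_succ_mk]

/-- The rank accumulated by `t` nodes is at most the total message size, with equality
iff `n - t ≤ m`. -/
theorem rank_accumulation_le (n r m t : ℕ) (hm : 0 < m) (hmr : m < r) (hrn : r ≤ n)
    (htn : t ≤ n) :
    (∑ p ∈ Finset.Icc (max 1 (r - (n - t))) (min t r),
        t.choose p * (n - t).choose (r - p) * min p (r - m) ≤ n.choose r * (r - m)) ∧
    ((∑ p ∈ Finset.Icc (max 1 (r - (n - t))) (min t r),
        t.choose p * (n - t).choose (r - p) * min p (r - m) = n.choose r * (r - m)) ↔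
      n - t ≤ m) := by
  set f : ℕ → ℕ := fun p => t.choose p * (n - t).choose (r - p) * min p (r - m) with hf
  set g : ℕ → ℕ := fun p => t.choose p * (n - t).choose (r - p) * (r - m) with hg
  -- step 1: the Icc sum equals the range sum
  have hsub : Finset.Icc (max 1 (r - (n - t))) (min t r) ⊆ Finset.range (r + 1) := by
    intro p hp
    rw [Finset.mem_Icc] at hp
    rw [Finset.mem_range, Nat.lt_succ_iff]
    exact hp.2.trans (min_le_right _ _)
  have hzero : ∀ p ∈ Finset.range (r + 1),
      p ∉ Finset.Icc (max 1 (r - (n - t))) (min t r) → f p = 0 := by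
    intro p hp hnp
    rw [Finset.mem_range, Nat.lt_succ_iff] at hp
    rw [Finset.mem_Icc, not_and_or] at hnp
    rcases hnp with h | h
    · push_neg at h
      rcases Nat.lt_or_ge p 1 with h0 | h1
      · interval_cases p; simp [hf]
      · have : r - p > n - t := by omega
        simp [hf, Nat.choose_eq_zero_of_lt this]
    · push_neg at h
      have : t < p := by omega
      simp [hf, Nat.choose_eq_zero_of_lt this]
  have hsum : ∑ p ∈ Finset.Icc (max 1 (r - (n - t))) (min t r), f p
      = ∑ p ∈ Finset.range (r + 1), f p :=
    Finset.sum_subset hsub hzero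
  have hgsum : ∑ p ∈ Finset.range (r + 1), g p = n.choose r * (r - m) := by
    rw [hg]
    simp only
    rw [← Finset.sum_mul, vandermonde_range n r t htn]
  have hle : ∀ p ∈ Finset.range (r + 1), f p ≤ g p := by
    intro p _
    exact Nat.mul_le_mul_left _ (min_le_right _ _)
  constructor
  · rw [hsum, ← hgsum]
    exact Finset.sum_le_sum hle
  · rw [hsum, ← hgsum, Finset.sum_eq_sum_iff_of_le hle]
    constructor
    · intro h
      by_contra hc
      push_neg at hc
      -- take p₀ = r - (n - t)
      set p₀ := r - (n - t) with hp₀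
      have hp₀r : p₀ ≤ r := Nat.sub_le _ _
      have h1 : p₀ ≤ t := by omega
      have h2 : r - p₀ ≤ n - t := by omega
      have h3 : p₀ < r - m := by omega
      have hmem : p₀ ∈ Finset.range (r + 1) := Finset.mem_range.mpr (by omega)
      have := h p₀ hmem
      simp only [hf, hg] at this
      have hc1 : t.choose p₀ ≠ 0 := (Nat.choose_pos h1).ne'
      have hc2 : (n - t).choose (r - p₀) ≠ 0 := (Nat.choose_pos h2).ne'
      have hmin : min p₀ (r - m) = p₀ := min_eq_left h3.le
      rw [hmin] at this
      have := Nat.eq_of_mul_eq_mul_left (Nat.pos_of_ne_zero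
        (mul_ne_zero hc1 hc2)) this
      omega
    · intro h p hp
      simp only [hf, hg]
      rcases Nat.eq_zero_or_pos ((n - t).choose (r - p)) with h0 | h0
      · rw [h0]; ring
      · have hrp : r - p ≤ n - t := by
          by_contra hc; push_neg at hc
          exact absurd h0.ne' (by simp [Nat.choose_eq_zero_of_lt hc])
        have : r - m ≤ p := by omega
        rw [min_eq_right this]
end

section
/- In a BIBD S_λ(r, n) with message size M_c = N(r-1) where N = λn(n-1)/(r(r-1)), the rank accumulated by any n-2 of the n nodes equals ρ_{n-2} = N(r-1) - λ = λn(n-1)/r - λ; equivalently, removing two nodes destroys exactly λ parity groups' worth of one extra symbol each, since the pair of removed node indices appears in exactly λ blocks. -/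
lemma sum_map_ite_card {X : Type*} [DecidableEq X] (s : Multiset (Finset X))
    (p : Finset X → Prop) [DecidablePred p] :
    (s.map (fun B => if p B then 1 else 0)).sum = Multiset.card (s.filter p) := by
  induction s using Multiset.induction with
  | empty => simp
  | cons a s ih =>
    by_cases h : p a <;> simp [h, ih, Nat.add_comm]

/-- In the canonical code from a BIBD `S_λ(r,n)`, any `n-2` nodes accumulate rank
`ρ_{n-2} = N(r-1) - λ`. -/
theorem bibd_rank_n_minus_two {X : Type*} [Fintype X] [DecidableEq X]
    (n r lam : ℕ) (hr : 2 ≤ r) (hrn : r < n) (hlam : 1 ≤ lam) (hX : Fintype.card X = n)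
    (blocks : Multiset (Finset X))
    (hsize : ∀ B ∈ blocks, B.card = r)
    (hpair : ∀ x y : X, x ≠ y →
      Multiset.card (blocks.filter (fun B => x ∈ B ∧ y ∈ B)) = lam)
    (T : Finset X) (hT : T.card = n - 2) :
    (blocks.map (fun B => min (B ∩ T).card (r - 1))).sum =
      Multiset.card blocks * (r - 1) - lam := by
  have hcompl : Tᶜ.card = 2 := by
    rw [Finset.card_compl, hT, hX]; omega
  obtain ⟨x, y, hxy, hTc⟩ := Finset.card_eq_two.mp hcompl
  have hx : x ∉ T := by
    have : x ∈ Tᶜ := by rw [hTc]; simp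
    simpa using this
  have hy : y ∉ T := by
    have : y ∈ Tᶜ := by rw [hTc]; simp
    simpa using this
  -- per-block identity
  have key : ∀ B ∈ blocks,
      min (B ∩ T).card (r - 1) + (if x ∈ B ∧ y ∈ B then 1 else 0) = r - 1 := by
    intro B hB
    have hBr := hsize B hB
    have hsd : (B \ T).card + (B ∩ T).card = r := by
      rw [Finset.card_sdiff_add_card_inter, hBr]
    have hsub : B \ T ⊆ ({x, y} : Finset X) := by
      intro z hz
      simp only [Finset.mem_sdiff] at hz
      have : z ∈ Tᶜ := by simpa using hz.2
      rwa [hTc] at this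
    by_cases hb : x ∈ B ∧ y ∈ B
    · have heq : B \ T = {x, y} := by
        apply Finset.Subset.antisymm hsub
        intro z hz
        simp only [Finset.mem_insert, Finset.mem_singleton] at hz
        rcases hz with rfl | rfl <;> simp [Finset.mem_sdiff, hb.1, hb.2, hx, hy]
      have hc2 : (B \ T).card = 2 := by rw [heq, Finset.card_pair hxy]
      have : (B ∩ T).card = r - 2 := by omega
      simp [hb, this]
      omega
    · have hsub1 : (B \ T).card ≤ 1 := by
        have : B \ T ⊆ if x ∈ B then {x} else {y} := by
          intro z hz
          have hz2 := hsub hz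
          simp only [Finset.mem_insert, Finset.mem_singleton] at hz2
          simp only [Finset.mem_sdiff] at hz
          rcases hz2 with rfl | rfl
          · simp [hz.1]
          · split
            · exact absurd ⟨by assumption, hz.1⟩ hb
            · simp
        calc (B \ T).card ≤ (if x ∈ B then ({x} : Finset X) else {y}).card :=
              Finset.card_le_card this
          _ ≤ 1 := by split <;> simp
      have : r - 1 ≤ (B ∩ T).card := by omega
      simp [hb, min_eq_right this]
  have hsum : ((blocks.map (fun B => min (B ∩ T).card (r - 1))).sum
      + (blocks.map (fun B => if x ∈ B ∧ y ∈ B then 1 else 0)).sum)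
      = Multiset.card blocks * (r - 1) := by
    rw [← Multiset.sum_map_add]
    calc (blocks.map fun B => min (B ∩ T).card (r - 1) + if x ∈ B ∧ y ∈ B then 1 else 0).sum
        = (blocks.map fun _ => r - 1).sum := by
          apply congrArg
          exact Multiset.map_congr rfl key
      _ = Multiset.card blocks * (r - 1) := by
          rw [Multiset.map_const', Multiset.sum_replicate, smul_eq_mul]
  have hind : (blocks.map (fun B => if x ∈ B ∧ y ∈ B then 1 else 0)).sum = lam := by
    rw [sum_map_ite_card]
    exact hpair x y hxy
  omega
end

section
/- Let q ≥ r be a prime power, N ≥ 1, and consider the code over F_q of length rN whose codewords are concatenations (c_1, …, c_N) where each c_i = (u_{i,1}, …, u_{i,r-1}, ∑_{j=1}^{r-1} u_{i,j}) with data (u_{i,j}) constrained by u_{N,r-1} = ∑_{j=1}^{r-2} φ_j ∑_{i=1}^{N} u_{i,j} + φ_{r-1} ∑_{i=1}^{N-1} u_{i,r-1}, where φ_1, …, φ_{r-1} ∈ F_q are distinct, nonzero, and φ_j ≠ -1 for 1 ≤ j ≤ r-2. Then the M = N(r-1) - 1 free data symbols are uniquely recoverable from any codeword in which, within exactly one index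 i, two coordinates of c_i are erased and all other coordinates are known. -/
/-- Data recovery for the `[n, k=n-2, d=n-1]` construction: with per-block single-parity
codes and one global parity symbol `u_{N,r-1}` with coefficients `φ_j` that are distinct,
nonzero, and `φ_j ≠ -1` for `j ≤ r-2`, the data is uniquely recoverable from any codeword
in which two coordinates within a single parity group are erased. Indices are 0-based:
data columns are `0, …, r-2`, the parity column is `r-1`, and the global parity is
`u_{N-1, r-2}`. -/
theorem embedded_mds_two_erasure_recovery (F : Type*) [Field F] [Fintype F]
    (q r N : ℕ) (hq : q = Fintype.card F) (hr : 2 ≤ r) (hqr : r ≤ q) (hN : 1 ≤ N)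
    (φ : ℕ → F)
    (hφ0 : ∀ j < r - 1, φ j ≠ 0)
    (hφinj : ∀ j₁ < r - 1, ∀ j₂ < r - 1, φ j₁ = φ j₂ → j₁ = j₂)
    (hφ1 : ∀ j < r - 2, φ j ≠ -1)
    (c : (ℕ → ℕ → F) → ℕ → ℕ → F)
    (hc : ∀ u : ℕ → ℕ → F, ∀ i j : ℕ,
      c u i j = if j < r - 1 then u i j else ∑ j' ∈ Finset.range (r - 1), u i j')
    (u u' : ℕ → ℕ → F)
    (hcon : u (N - 1) (r - 2) =
      (∑ j ∈ Finset.range (r - 2), φ j * ∑ i ∈ Finset.range N, u i j) +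
        φ (r - 2) * ∑ i ∈ Finset.range (N - 1), u i (r - 2))
    (hcon' : u' (N - 1) (r - 2) =
      (∑ j ∈ Finset.range (r - 2), φ j * ∑ i ∈ Finset.range N, u' i j) +
        φ (r - 2) * ∑ i ∈ Finset.range (N - 1), u' i (r - 2))
    (i₀ j₁ j₂ : ℕ) (hi₀ : i₀ < N) (hj₁ : j₁ < r) (hj₂ : j₂ < r) (hjj : j₁ ≠ j₂)
    (hagree : ∀ i < N, ∀ j < r,
      (i ≠ i₀ ∨ (j ≠ j₁ ∧ j ≠ j₂)) → c u i j = c u' i j) :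
    ∀ i < N, ∀ j < r - 1, u i j = u' i j := by
  set d : ℕ → ℕ → F := fun i j => u i j - u' i j with hd
  have hr1 : r - 1 < r := by omega
  have hr2 : r - 2 < r - 1 := by omega
  -- non-erased data positions agree
  have hz : ∀ i < N, ∀ j < r - 1, (i ≠ i₀ ∨ (j ≠ j₁ ∧ j ≠ j₂)) → d i j = 0 := by
    intro i hi j hj h
    have h2 := hagree i hi j (by omega) h
    rw [hc, hc, if_pos hj, if_pos hj] at h2
    simp [hd, h2]
  -- column sums collapse to the i₀ entry
  have hcol : ∀ j < r - 1, ∑ i ∈ Finset.range N, d i j = d i₀ j := by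
    intro j hj
    refine Finset.sum_eq_single_of_mem i₀ (Finset.mem_range.mpr hi₀) ?_
    intro i hi hne
    exact hz i (Finset.mem_range.mp hi) j hj (Or.inl hne)
  have hglobal : d (N-1) (r-2) =
      (∑ j ∈ Finset.range (r - 2), φ j * ∑ i ∈ Finset.range N, d i j) +
        φ (r - 2) * ∑ i ∈ Finset.range (N - 1), d i (r - 2) := by
    simp only [hd, Finset.sum_sub_distrib, mul_sub]
    rw [hcon, hcon']
    ring
  have htr : ∑ i ∈ Finset.range (N - 1), d i (r - 2) =
      if i₀ < N - 1 then d i₀ (r-2) else 0 := by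
    by_cases h : i₀ < N - 1
    · rw [if_pos h]
      refine Finset.sum_eq_single_of_mem i₀ (Finset.mem_range.mpr h) ?_
      intro i hi hne
      exact hz i (by have := Finset.mem_range.mp hi; omega) (r-2) hr2 (Or.inl hne)
    · rw [if_neg h]
      refine Finset.sum_eq_zero ?_
      intro i hi
      have hi' := Finset.mem_range.mp hi
      exact hz i (by omega) (r-2) hr2 (Or.inl (by omega))
  set w : ℕ → F := fun j => if j = r - 2 then (if i₀ = N - 1 then -1 else φ (r-2)) else φ j
    with hw
  have hwne : ∀ j < r - 1, w j ≠ 0 := by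
    intro j hj
    simp only [hw]
    split
    · split
      · norm_num
      · exact hφ0 _ hr2
    · exact hφ0 _ hj
  have hwinj : ∀ j < r - 1, ∀ j' < r - 1, j ≠ j' → w j ≠ w j' := by
    have key : ∀ j < r - 1, j ≠ r - 2 →
        (if i₀ = N - 1 then (-1 : F) else φ (r-2)) ≠ φ j := by
      intro j hj hne
      by_cases hN1 : i₀ = N - 1
      · rw [if_pos hN1]
        intro hcontra
        exact hφ1 j (by omega) hcontra.symm
      · rw [if_neg hN1]
        intro hcontra
        exact hne (hφinj (r-2) hr2 j hj hcontra).symm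
    intro j hj j' hj' hne
    simp only [hw]
    by_cases h1 : j = r - 2 <;> by_cases h2 : j' = r - 2
    · omega
    · rw [if_pos h1, if_neg h2]; exact key j' hj' h2
    · rw [if_neg h1, if_pos h2]; exact fun hh => key j hj h1 hh.symm
    · rw [if_neg h1, if_neg h2]
      intro hcontra; exact hne (hφinj j hj j' hj' hcontra)
  have heq : ∑ j ∈ Finset.range (r - 1), w j * d i₀ j = 0 := by
    have hsplit : r - 1 = (r - 2) + 1 := by omega
    rw [hsplit, Finset.sum_range_succ]
    have h1 : ∑ j ∈ Finset.range (r-2), w j * d i₀ j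
        = ∑ j ∈ Finset.range (r-2), φ j * d i₀ j := by
      refine Finset.sum_congr rfl ?_
      intro j hj
      have hne : j ≠ r - 2 := by have := Finset.mem_range.mp hj; omega
      simp [hw, hne]
    rw [h1]
    have hg2 : d (N-1) (r-2) =
        (∑ j ∈ Finset.range (r-2), φ j * d i₀ j) +
          φ (r-2) * (if i₀ < N - 1 then d i₀ (r-2) else 0) := by
      rw [hglobal, htr]
      congr 1
      refine Finset.sum_congr rfl ?_
      intro j hj
      rw [hcol j (by have := Finset.mem_range.mp hj; omega)]
    by_cases hN1 : i₀ = N - 1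
    · have hnlt : ¬ (i₀ < N - 1) := by omega
      rw [if_neg hnlt, mul_zero, add_zero] at hg2
      rw [← hN1] at hg2
      simp only [hw, if_pos rfl, if_pos hN1]
      rw [hg2]; ring
    · have hlt : i₀ < N - 1 := by omega
      rw [if_pos hlt] at hg2
      have hz0 : d (N-1) (r-2) = 0 :=
        hz (N-1) (by omega) (r-2) hr2 (Or.inl (by omega))
      rw [hz0] at hg2
      simp only [hw, if_pos rfl, if_neg hN1]
      exact hg2.symm
  -- key: erased data entries vanish
  have key1 : j₁ < r - 1 → j₂ < r - 1 → False ∨ True := fun _ _ => Or.inr trivial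
  have key : (j₁ < r - 1 → d i₀ j₁ = 0) ∧ (j₂ < r - 1 → d i₀ j₂ = 0) := by
    by_cases hb : j₁ < r - 1 ∧ j₂ < r - 1
    · obtain ⟨hb1, hb2⟩ := hb
      -- parity equation at row i₀ is intact
      have hpar : d i₀ j₁ + d i₀ j₂ = 0 := by
        have hA := hagree i₀ hi₀ (r-1) hr1 (Or.inr ⟨by omega, by omega⟩)
        rw [hc, hc, if_neg (lt_irrefl _), if_neg (lt_irrefl _)] at hA
        have hs : ∑ j ∈ Finset.range (r-1), d i₀ j = 0 := by
          simp only [hd, Finset.sum_sub_distrib]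
          rw [hA, sub_self]
        have hsub : ({j₁, j₂} : Finset ℕ) ⊆ Finset.range (r-1) := by
          intro x hx
          simp only [Finset.mem_insert, Finset.mem_singleton] at hx
          rcases hx with h | h <;> subst h <;> exact Finset.mem_range.mpr (by omega)
        rw [← Finset.sum_subset hsub ?_] at hs
        · rwa [Finset.sum_pair hjj] at hs
        · intro x hx hnx
          simp only [Finset.mem_insert, Finset.mem_singleton, not_or] at hnx
          exact hz i₀ hi₀ x (Finset.mem_range.mp hx) (Or.inr ⟨hnx.1, hnx.2⟩)
      have hweq : w j₁ * d i₀ j₁ + w j₂ * d i₀ j₂ = 0 := by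
        have hsub : ({j₁, j₂} : Finset ℕ) ⊆ Finset.range (r-1) := by
          intro x hx
          simp only [Finset.mem_insert, Finset.mem_singleton] at hx
          rcases hx with h | h <;> subst h <;> exact Finset.mem_range.mpr (by omega)
        rw [← Finset.sum_subset hsub ?_] at heq
        · rwa [Finset.sum_pair hjj] at heq
        · intro x hx hnx
          simp only [Finset.mem_insert, Finset.mem_singleton, not_or] at hnx
          rw [hz i₀ hi₀ x (Finset.mem_range.mp hx) (Or.inr ⟨hnx.1, hnx.2⟩), mul_zero]
      have hzero : (w j₁ - w j₂) * d i₀ j₁ = 0 := by linear_combination hweq - w j₂ * hpar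
      have hwne12 : w j₁ - w j₂ ≠ 0 := sub_ne_zero.mpr (hwinj j₁ hb1 j₂ hb2 hjj)
      have h1 : d i₀ j₁ = 0 := by
        rcases mul_eq_zero.mp hzero with h | h
        · exact absurd h hwne12
        · exact h
      have h2 : d i₀ j₂ = 0 := by linear_combination hpar - h1
      exact ⟨fun _ => h1, fun _ => h2⟩
    · -- one of the erased columns is the parity column r-1
      rw [not_and_or] at hb
      have main : ∀ js < r - 1, (js = j₁ ∨ js = j₂) → d i₀ js = 0 := by
        intro js hjs hjor
        have hred : ∑ j ∈ Finset.range (r - 1), w j * d i₀ j = w js * d i₀ js := by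
          refine Finset.sum_eq_single_of_mem js (Finset.mem_range.mpr hjs) ?_
          intro j hj hne
          have hj' := Finset.mem_range.mp hj
          have hzj : d i₀ j = 0 := by
            refine hz i₀ hi₀ j hj' (Or.inr ⟨?_, ?_⟩) <;>
              rcases hjor with h | h <;> rcases hb with hB | hB <;> omega
          rw [hzj, mul_zero]
        rw [hred] at heq
        rcases mul_eq_zero.mp heq with h | h
        · exact absurd h (hwne js hjs)
        · exact h
      exact ⟨fun h => main j₁ h (Or.inl rfl), fun h => main j₂ h (Or.inr rfl)⟩
  intro i hi j hj
  have : d i j = 0 := by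
    by_cases he : i = i₀ ∧ (j = j₁ ∨ j = j₂)
    · obtain ⟨hei, hej⟩ := he
      subst hei
      rcases hej with h | h <;> subst h
      · exact key.1 hj
      · exact key.2 hj
    · refine hz i hi j hj ?_
      tauto
  have := this
  simpa [hd, sub_eq_zero] using this
end
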